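/- Define coefficients A_{[l,0;k,i]} = a(l,0;k,i)/d(l,0) with a(l,0;k,0) = (l-k)(l-1-k), a(l,0;k,1) = -2(l-k)(l-2k-1), a(l,0;k,2) = l²-6kl+6k²-l, a(l,0;k,3) = 2(l-2k+1)k, a(l,0;k,4) = k(k-1), d(l,0) = l(l-1). Then for l ≥ 2 the linear map I^l_0: V_l → V_l ⊗ V_4 given by I^l_0(v_k^{(l)}) = Σ_{i=0}^4 A_{[l,0;k,i]}·v_{k+2-i}^{(l)} ⊗ w_i (with out-of-range basis vectors set to 0) is a nonzero sl(2,C)-equivariant map. -/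

import Mathlib

noncomputable section

namespace Stmt8


/-- The delta basis vector `v_k` of the sl(2,ℂ)-module `V_n`, realized inside `ℤ → ℂ`. -/
def dv (k : ℤ) : ℤ → ℂ := fun j => if j = k then 1 else 0

/-- `H` on `V_n`: `H·v_k = (n-2k)v_k`. -/
def Hv (n : ℤ) (f : ℤ → ℂ) : ℤ → ℂ := fun j => ((n - 2 * j : ℤ) : ℂ) * f j
/-- `E` on `V_n`: `E·v_k = -k·v_{k-1}`. -/
def Ev (f : ℤ → ℂ) : ℤ → ℂ := fun j => ((-(j + 1) : ℤ) : ℂ) * f (j + 1)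
/-- `F` on `V_n`: `F·v_k = (k-n)·v_{k+1}`. -/
def Fv (n : ℤ) (f : ℤ → ℂ) : ℤ → ℂ := fun j => ((j - 1 - n : ℤ) : ℂ) * f (j - 1)

/-- The diagonal action of `H` on `V_l ⊗ V_4`, components indexed by `(q, i)`. -/
def Ht (l : ℤ) (f : ℤ × ℤ → ℂ) : ℤ × ℤ → ℂ :=
  fun p => ((l + 4 - 2 * p.1 - 2 * p.2 : ℤ) : ℂ) * f p
/-- The diagonal action of `E` on `V_l ⊗ V_4`. -/
def Et (f : ℤ × ℤ → ℂ) : ℤ × ℤ → ℂ :=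
  fun p => ((-(p.1 + 1) : ℤ) : ℂ) * f (p.1 + 1, p.2) + ((-(p.2 + 1) : ℤ) : ℂ) * f (p.1, p.2 + 1)
/-- The diagonal action of `F` on `V_l ⊗ V_4`. -/
def Ft (l : ℤ) (f : ℤ × ℤ → ℂ) : ℤ × ℤ → ℂ :=
  fun p => ((p.1 - 1 - l : ℤ) : ℂ) * f (p.1 - 1, p.2) + ((p.2 - 5 : ℤ) : ℂ) * f (p.1, p.2 - 1)

/-- The Clebsch–Gordan coefficients `A_{[l,0;k,i]} = a(l,0;k,i)/d(l,0)`. -/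
def Acoef (l k i : ℤ) : ℂ :=
  (if i = 0 then ((l-k)*(l-1-k) : ℤ)
   else if i = 1 then (-(2*(l-k)*(l-2*k-1)) : ℤ)
   else if i = 2 then (l^2-6*k*l+6*k^2-l : ℤ)
   else if i = 3 then (2*(l-2*k+1)*k : ℤ)
   else if i = 4 then (k*(k-1) : ℤ) else 0 : ℤ)
    / ((l*(l-1) : ℤ) : ℂ)

/-- The map `I^l_0 : V_l → V_l ⊗ V_4`, whose `(q,i)`-component of `I f` receives the contribution from
`k = p.1 + p.2 - 2`. -/
def Iop (l : ℤ) (f : ℤ → ℂ) : ℤ × ℤ → ℂ :=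
  fun p => if 0 ≤ p.2 ∧ p.2 ≤ 4 then Acoef l (p.1 + p.2 - 2) p.2 * f (p.1 + p.2 - 2) else 0

set_option maxHeartbeats 2000000 in
/-- `I^l_0 : V_l → V_l ⊗ V_4` is a nonzero sl(2,ℂ)-equivariant map. -/
theorem stmt_8 (l : ℤ) (hl : 2 ≤ l) :
    (∀ k : ℤ, 0 ≤ k → k ≤ l →
      Iop l (Hv (l) (dv k)) = Ht l (Iop l (dv k)) ∧
      Iop l (Ev (dv k)) = Et (Iop l (dv k)) ∧
      Iop l (Fv (l) (dv k)) = Ft l (Iop l (dv k))) ∧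
    (∃ k : ℤ, 0 ≤ k ∧ k ≤ l ∧ Iop l (dv k) ≠ 0) := by
  have h0 : ((l*(l-1) : ℤ) : ℂ) ≠ 0 := by
    rw [Int.cast_ne_zero]
    have : (0:ℤ) < l*(l-1) := by nlinarith
    exact this.ne'
  constructor
  · intro k hk0 hkl
    refine ⟨?_, ?_, ?_⟩ <;> funext p <;> obtain ⟨q, i⟩ := p
    · -- H
      simp only [Iop, Hv, Ht]
      split_ifs with hc
      · push_cast; ring
      · simp
    · -- E
      by_cases hi : -1 ≤ i ∧ i ≤ 5
      · obtain ⟨hi1, hi2⟩ := hi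
        simp only [Iop, Ev, Et, dv, Acoef]
        interval_cases i <;>
          · norm_num
            try split_ifs <;> first | omega | (field_simp; try push_cast; try ring)
      · have c1 : ¬(0 ≤ i ∧ i ≤ 4) := by omega
        have c2 : ¬(0 ≤ i + 1 ∧ i + 1 ≤ 4) := by omega
        simp [Iop, Ev, Et, c1, c2]
        exact fun h1 h2 => absurd ⟨h1, by omega⟩ c2
    · -- F
      by_cases hi : -1 ≤ i ∧ i ≤ 5
      · obtain ⟨hi1, hi2⟩ := hi
        simp only [Iop, Fv, Ft, dv, Acoef]
        interval_cases i <;>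
          · norm_num
            try split_ifs <;> first | omega | (field_simp; try push_cast; try ring)
      · have c1 : ¬(0 ≤ i ∧ i ≤ 4) := by omega
        have c2 : ¬(0 ≤ i - 1 ∧ i - 1 ≤ 4) := by omega
        simp [Iop, Fv, Ft, c1, c2, show ¬(1 ≤ i ∧ i ≤ 5) from by omega]
  · refine ⟨0, le_refl 0, by omega, fun h => ?_⟩
    have h2 := congrFun h (2, 0)
    simp only [Iop, Acoef, dv, Pi.zero_apply] at h2
    norm_num at h2
    rcases h2 with h2 | h2
    · omega
    · have h3 : (l:ℂ) = 1 := by linear_combination h2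
      have : l = 1 := by exact_mod_cast h3
      omega

end Stmt8
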